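/- Let r ∈ (0, 1/2) and s ∈ (1/2, 1) be real numbers, and consider the triangle in the Euclidean plane ℝ² with vertices x_m = (0, 0), e₁ = (r − 1, −s) and x₂ = (1 − r, −s). Then each of the three interior angles of this triangle (the angle at x_m between e₁ and x₂, the angle at e₁ between x_m and x₂, and the angle at x₂ between e₁ and x_m) is strictly less than 3π/4 (i.e. 135°). -/

import Mathlib

open EuclideanGeometry

/-- The point `(a, b)` in the Euclidean plane `ℝ²`. -/
noncomputable def pt2 (a b : ℝ) : EuclideanSpace ℝ (Fin 2) :=
  (WithLp.equiv 2 (Fin 2 → ℝ)).symm ![a, b]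

lemma pt2_sub (a b c d : ℝ) : pt2 a b - pt2 c d = pt2 (a-c) (b-d) := by
  simp [pt2]
  ext i
  fin_cases i <;> simp

lemma pt2_inner (a b c d : ℝ) : inner ℝ (pt2 a b) (pt2 c d) = a*c + b*d := by
  simp [pt2, PiLp.inner_apply, Fin.sum_univ_two]
  ring

lemma pt2_norm (a b : ℝ) : ‖pt2 a b‖ = Real.sqrt (a^2 + b^2) := by
  simp [pt2, EuclideanSpace.norm_eq, Fin.sum_univ_two, sq_abs]

lemma arccos_lt_three_pi_div_four {t : ℝ} (ht : -(Real.sqrt 2 / 2) < t) (ht1 : t ≤ 1) :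
    Real.arccos t < 3 * Real.pi / 4 := by
  have h34 : Real.arccos (-(Real.sqrt 2 / 2)) = 3 * Real.pi / 4 := by
    rw [Real.arccos_neg, show Real.sqrt 2 / 2 = Real.cos (Real.pi / 4) from
      (Real.cos_pi_div_four).symm, Real.arccos_cos (by positivity)
      (by linarith [Real.pi_pos])]
    ring
  have h2 : Real.sqrt 2 ≤ 2 := by
    nlinarith [Real.sq_sqrt (by norm_num : (2:ℝ) ≥ 0), Real.sqrt_nonneg 2]
  rw [← h34]
  exact Real.strictAntiOn_arccos ⟨by linarith, by linarith⟩
    ⟨by linarith, ht1⟩ ht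

/-- For `r ∈ (0, 1/2)` and `s ∈ (1/2, 1)`, each interior angle of the triangle with
vertices `x_m = (0,0)`, `e₁ = (r − 1, −s)` and `x₂ = (1 − r, −s)` is strictly less
than `3π/4`. -/
theorem stmt2 (r s : ℝ) (hr : r ∈ Set.Ioo (0 : ℝ) (1 / 2))
    (hs : s ∈ Set.Ioo (1 / 2 : ℝ) 1)
    (xm e₁ x₂ : EuclideanSpace ℝ (Fin 2))
    (hxm : xm = pt2 0 0) (he₁ : e₁ = pt2 (r - 1) (-s)) (hx₂ : x₂ = pt2 (1 - r) (-s)) :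
    ∠ e₁ xm x₂ < 3 * Real.pi / 4 ∧
    ∠ xm e₁ x₂ < 3 * Real.pi / 4 ∧
    ∠ e₁ x₂ xm < 3 * Real.pi / 4 := by
  obtain ⟨hr0, hr1⟩ := hr
  obtain ⟨hs0, hs1⟩ := hs
  have hpi := Real.pi_pos
  have h14 : (1.4 : ℝ) < Real.sqrt 2 := by
    nlinarith [Real.sq_sqrt (by norm_num : (2:ℝ) ≥ 0), Real.sqrt_nonneg 2]
  have hX : (0:ℝ) < (1-r)^2 + s^2 := by nlinarith
  have hY : (0:ℝ) < (2*(1-r))^2 + 0^2 := by nlinarith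
  subst hxm he₁ hx₂
  simp only [EuclideanGeometry.angle, vsub_eq_sub, InnerProductGeometry.angle,
    pt2_sub, pt2_inner, pt2_norm]
  refine ⟨?_, ?_, ?_⟩
  · have harg : (r - 1 - 0) * (1 - r - 0) + (-s - 0) * (-s - 0) = s^2 - (1-r)^2 := by ring
    have e1 : (r - 1 - 0)^2 + (-s - 0)^2 = (1-r)^2 + s^2 := by ring
    have e2 : (1 - r - 0)^2 + (-s - 0)^2 = (1-r)^2 + s^2 := by ring
    rw [harg, e1, e2, Real.mul_self_sqrt hX.le]
    apply arccos_lt_three_pi_div_four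
    · rw [lt_div_iff₀ hX]
      nlinarith
    · rw [div_le_one hX]
      nlinarith
  · apply lt_of_lt_of_le (b := Real.pi / 2)
    · rw [Real.arccos_lt_pi_div_two]
      apply div_pos
      · nlinarith
      · exact mul_pos (Real.sqrt_pos.mpr (by nlinarith)) (Real.sqrt_pos.mpr (by nlinarith))
    · linarith
  · apply lt_of_lt_of_le (b := Real.pi / 2)
    · rw [Real.arccos_lt_pi_div_two]
      apply div_pos
      · nlinarith
      · exact mul_pos (Real.sqrt_pos.mpr (by nlinarith)) (Real.sqrt_pos.mpr (by nlinarith))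
    · linarith
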